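/- Let u : ℝ_{>0} → ℝ be semiconvex near a point x₀ (i.e., u(x) + K x² is convex in a neighborhood of x₀ for some K). Suppose that whenever φ ∈ C² touches u from below at x₀ (φ(x₀) = u(x₀), u - φ has a local minimum at x₀), one has ρ u(x₀) - b(x₀)φ'(x₀) - (1/2)σ²(x₀)φ''(x₀) - f(x₀) ≥ 0, where σ(x₀) > 0. Then the left and right derivatives u'_-(x₀), u'_+(x₀) (which exist by semiconvexity) are equal, i.e., u is differentiable at x₀. -/

import Mathlib

open Set Filter Metric

theorem stmt_10 (x₀ ρ : ℝ) (hx₀ : 0 < x₀) (b σ f u : ℝ → ℝ)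
    (hσ : 0 < σ x₀)
    (hsemiconvex : ∃ K : ℝ, ∃ δ > (0:ℝ),
      ConvexOn ℝ (Metric.ball x₀ δ) (fun x => u x + K * x ^ 2))
    (hsupersol : ∀ φ : ℝ → ℝ, ContDiff ℝ 2 φ → φ x₀ = u x₀ →
      (∀ᶠ x in nhds x₀, φ x ≤ u x) →
      0 ≤ ρ * u x₀ - b x₀ * deriv φ x₀
          - (1 / 2) * (σ x₀) ^ 2 * deriv (deriv φ) x₀ - f x₀) :
    DifferentiableAt ℝ u x₀ := by
  obtain ⟨K, δ, hδ, hconv⟩ := hsemiconvex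
  set g : ℝ → ℝ := fun x => u x + K * x ^ 2 with hg
  have hx₀mem : x₀ ∈ Metric.ball x₀ δ := Metric.mem_ball_self hδ
  have hIoo : Metric.ball x₀ δ = Set.Ioo (x₀ - δ) (x₀ + δ) := Real.ball_eq_Ioo x₀ δ
  set sl : ℝ → ℝ := fun y => (g y - g x₀) / (y - x₀) with hsl
  have mono : ∀ ⦃x y : ℝ⦄, x ∈ Metric.ball x₀ δ → y ∈ Metric.ball x₀ δ →
      x ≠ x₀ → y ≠ x₀ → x ≤ y → sl x ≤ sl y := fun x y hx hy hx' hy' hxy =>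
    hconv.secant_mono hx₀mem hx hy hx' hy' hxy
  set R : Set ℝ := sl '' (Set.Ioo x₀ (x₀ + δ)) with hR
  set Lset : Set ℝ := sl '' (Set.Ioo (x₀ - δ) x₀) with hL
  have hsubR : Set.Ioo x₀ (x₀ + δ) ⊆ Metric.ball x₀ δ := by
    rw [hIoo]; exact Set.Ioo_subset_Ioo (by linarith) le_rfl
  have hsubL : Set.Ioo (x₀ - δ) x₀ ⊆ Metric.ball x₀ δ := by
    rw [hIoo]; exact Set.Ioo_subset_Ioo le_rfl (by linarith)
  have hRne : R.Nonempty := ⟨sl (x₀ + δ/2), ⟨x₀ + δ/2, ⟨by linarith, by linarith⟩, rfl⟩⟩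
  have hLne : Lset.Nonempty := ⟨sl (x₀ - δ/2), ⟨x₀ - δ/2, ⟨by linarith, by linarith⟩, rfl⟩⟩
  have hLR : ∀ a ∈ Lset, ∀ r ∈ R, a ≤ r := by
    rintro a ⟨x, hx, rfl⟩ r ⟨y, hy, rfl⟩
    exact mono (hsubL hx) (hsubR hy) (ne_of_lt hx.2) (ne_of_gt hy.1) (le_of_lt (hx.2.trans hy.1))
  obtain ⟨r0, hr0⟩ := hRne
  obtain ⟨a0, ha0⟩ := hLne
  have hbddL : BddAbove Lset := ⟨r0, fun a ha => hLR a ha r0 hr0⟩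
  have hbddR : BddBelow R := ⟨a0, fun r hr => hLR a0 ha0 r hr⟩
  set A : ℝ := sSup Lset with hA
  set B : ℝ := sInf R with hB
  have hAB : A ≤ B := csSup_le ⟨a0, ha0⟩ fun a ha => le_csInf ⟨r0, hr0⟩ fun r hr => hLR a ha r hr
  have hslR : ∀ y ∈ Set.Ioo x₀ (x₀ + δ), B ≤ sl y := fun y hy => csInf_le hbddR ⟨y, hy, rfl⟩
  have hslL : ∀ x ∈ Set.Ioo (x₀ - δ) x₀, sl x ≤ A := fun x hx => le_csSup hbddL ⟨x, hx, rfl⟩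
  rcases lt_or_eq_of_le hAB with hlt | heq
  · -- contradiction branch
    exfalso
    set p : ℝ := (A + B) / 2 with hp
    set c : ℝ := (B - A) / 2 with hc
    have hc0 : 0 < c := by simp only [hc]; linarith
    have lower : ∀ x ∈ Metric.ball x₀ δ,
        u x₀ + p * (x - x₀) + c * |x - x₀| - K * (x ^ 2 - x₀ ^ 2) ≤ u x := by
      intro x hx
      rcases lt_trichotomy x x₀ with h | h | h
      · have hx' : x ∈ Set.Ioo (x₀ - δ) x₀ := by rw [hIoo] at hx; exact ⟨hx.1, h⟩
        have hs := hslL x hx'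
        have hne : x - x₀ < 0 := by linarith
        rw [hsl] at hs
        simp only at hs
        rw [div_le_iff_of_neg hne] at hs
        simp only [hg] at hs
        rw [abs_of_neg (by linarith : x - x₀ < 0)]
        have hpc : p - c = A := by simp only [hp, hc]; ring
        nlinarith [hs]
      · subst h; simp
      · have hx' : x ∈ Set.Ioo x₀ (x₀ + δ) := by rw [hIoo] at hx; exact ⟨h, hx.2⟩
        have hs := hslR x hx'
        have hne : 0 < x - x₀ := by linarith
        rw [hsl] at hs
        simp only at hs
        rw [le_div_iff₀ hne] at hs
        simp only [hg] at hs
        rw [abs_of_pos (by linarith : 0 < x - x₀)]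
        have hpc : p + c = B := by simp only [hp, hc]; ring
        nlinarith [hs]
    have key : ∀ N : ℝ, 1 ≤ N →
        0 ≤ ρ * u x₀ - b x₀ * (p - 2 * K * x₀) - 1 / 2 * σ x₀ ^ 2 * (-(2 * K) + N) - f x₀ := by
      intro N hN
      set φ : ℝ → ℝ := fun x => u x₀ + p * (x - x₀) - K * (x ^ 2 - x₀ ^ 2) + N / 2 * (x - x₀) ^ 2
        with hφ
      have hC : ContDiff ℝ 2 φ := by
        rw [hφ]; fun_prop
      have hφx₀ : φ x₀ = u x₀ := by simp [hφ]
      have hder : ∀ x, HasDerivAt φ (p - 2 * K * x + N * (x - x₀)) x := by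
        intro x
        have h0 : HasDerivAt (fun y : ℝ => y - x₀) 1 x := (hasDerivAt_id x).sub_const x₀
        have h1 := h0.const_mul p
        have h2 : HasDerivAt (fun y : ℝ => y ^ 2 - x₀ ^ 2) (2 * x) x := by
          simpa using (hasDerivAt_pow 2 x).sub_const (x₀ ^ 2)
        have h3 := h2.const_mul K
        have h4 : HasDerivAt (fun y : ℝ => (y - x₀) ^ 2) (2 * (x - x₀)) x := by
          simpa using h0.fun_pow 2
        have h5 := h4.const_mul (N / 2)
        have h6 := ((h1.const_add (u x₀)).sub h3).add h5
        refine h6.congr_deriv ?_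
        ring
      have hderiv1 : deriv φ = fun x => p - 2 * K * x + N * (x - x₀) :=
        funext fun x => (hder x).deriv
      have hderiv2 : deriv (deriv φ) x₀ = -(2 * K) + N := by
        rw [hderiv1]
        have h0 : HasDerivAt (fun y : ℝ => p - 2 * K * y + N * (y - x₀)) (-(2 * K) + N) x₀ := by
          have h1 : HasDerivAt (fun y : ℝ => 2 * K * y) (2 * K) x₀ := by
            simpa using (hasDerivAt_id x₀).const_mul (2 * K)
          have h2 : HasDerivAt (fun y : ℝ => y - x₀) 1 x₀ := (hasDerivAt_id x₀).sub_const x₀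
          have h3 := (h1.const_sub p).add (h2.const_mul N)
          refine h3.congr_deriv ?_
          ring
        exact h0.deriv
      have hev : ∀ᶠ x in nhds x₀, φ x ≤ u x := by
        have hN0 : (0:ℝ) < N := by linarith
        have hr : 0 < min δ (2 * c / N) := lt_min hδ (by positivity)
        filter_upwards [Metric.ball_mem_nhds x₀ hr] with x hx
        have hx1 : x ∈ Metric.ball x₀ δ := Metric.ball_subset_ball (min_le_left _ _) hx
        have hx2 : |x - x₀| < 2 * c / N := by
          have := mem_ball_iff_norm.mp hx
          rw [Real.norm_eq_abs] at this
          exact lt_of_lt_of_le this (min_le_right _ _)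
        have hlow := lower x hx1
        have habs : N / 2 * (x - x₀) ^ 2 ≤ c * |x - x₀| := by
          have h1 : 0 ≤ |x - x₀| := abs_nonneg _
          have h2 : |x - x₀| * N < 2 * c := by
            rw [lt_div_iff₀ hN0] at hx2; exact hx2
          nlinarith [sq_abs (x - x₀)]
        simp only [hφ]
        linarith
      have hss := hsupersol φ hC hφx₀ hev
      have e1 : deriv φ x₀ = p - 2 * K * x₀ := by rw [(hder x₀).deriv]; ring
      rw [e1, hderiv2] at hss
      linarith
    set M : ℝ := ρ * u x₀ - b x₀ * (p - 2 * K * x₀) + σ x₀ ^ 2 * K - f x₀ with hM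
    have hσ2 : (0:ℝ) < σ x₀ ^ 2 := by positivity
    set N : ℝ := max 1 (2 * (M + 1) / σ x₀ ^ 2) with hN
    have h1 := key N (le_max_left _ _)
    have h2 : 2 * (M + 1) / σ x₀ ^ 2 ≤ N := le_max_right _ _
    have h3 : 1 / 2 * σ x₀ ^ 2 * (2 * (M + 1) / σ x₀ ^ 2) = M + 1 := by
      field_simp
    have h4 : M + 1 ≤ 1 / 2 * σ x₀ ^ 2 * N := by
      rw [← h3]
      exact mul_le_mul_of_nonneg_left h2 (by positivity)
    nlinarith
  · -- differentiable branch
    have tend : Tendsto (slope g x₀) (nhdsWithin x₀ {x₀}ᶜ) (nhds A) := by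
      rw [Metric.tendsto_nhds]
      intro ε hε
      have hBlt : B < A + ε := by rw [← heq]; linarith
      obtain ⟨r1, hr1R, hr1⟩ := exists_lt_of_csInf_lt ⟨r0, hr0⟩ hBlt
      obtain ⟨y₁, hy₁, rfl⟩ := hr1R
      obtain ⟨r2, hr2L, hr2⟩ := exists_lt_of_lt_csSup ⟨a0, ha0⟩ (show A - ε < A by linarith)
      obtain ⟨y₂, hy₂, rfl⟩ := hr2L
      rw [eventually_nhdsWithin_iff]
      filter_upwards [Ioo_mem_nhds hy₂.2 hy₁.1] with y hy hyne
      have hyne' : y ≠ x₀ := hyne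
      have hsleq : slope g x₀ y = sl y := by rw [slope_def_field]
      rw [Real.dist_eq, hsleq]
      rcases lt_or_gt_of_ne hyne' with h | h
      · have hy' : y ∈ Set.Ioo (x₀ - δ) x₀ := ⟨hy₂.1.trans hy.1, h⟩
        have hle := hslL y hy'
        have hge : sl y₂ ≤ sl y :=
          mono (hsubL hy₂) (hsubL hy') (ne_of_lt hy₂.2) hyne' (le_of_lt hy.1)
        rw [abs_lt]; constructor <;> linarith
      · have hy' : y ∈ Set.Ioo x₀ (x₀ + δ) := ⟨h, hy.2.trans hy₁.2⟩
        have hge := hslR y hy'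
        have hle : sl y ≤ sl y₁ :=
          mono (hsubR hy') (hsubR hy₁) hyne' (ne_of_gt hy₁.1) (le_of_lt hy.2)
        rw [← heq] at hge
        rw [abs_lt]; constructor <;> linarith
    have hg' : HasDerivAt g A x₀ := hasDerivAt_iff_tendsto_slope.2 tend
    have hgd : DifferentiableAt ℝ g x₀ := hg'.differentiableAt
    have hsq : DifferentiableAt ℝ (fun x : ℝ => K * x ^ 2) x₀ :=
      (differentiableAt_pow 2).const_mul K
    have heq2 : u = fun x => g x - K * x ^ 2 := by
      funext x; simp only [hg]; ring
    rw [heq2]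
    exact hgd.sub hsq
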